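/- Let H be a complex Hilbert space and S, T bounded operators on H such that ST and TS are compact. Then the essential spectrum satisfies σ_e(S + T) \ {0} = (σ_e(S) ∪ σ_e(T)) \ {0}. -/

import Mathlib

/-- The essential spectrum of a bounded operator `T`, defined via Atkinson's
characterization: `μ ∉ σ_e(T)` iff `T - μ • 1` is invertible modulo compact
operators (equivalently, `[T] - μ[I]` is invertible in the Calkin algebra). -/
def essentialSpectrum {H : Type*} [NormedAddCommGroup H] [InnerProductSpace ℂ H]
    [CompleteSpace H] (T : H →L[ℂ] H) : Set ℂ :=
  {μ : ℂ | ¬ ∃ S : H →L[ℂ] H,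
      IsCompactOperator ⇑(S * (T - μ • 1) - 1) ∧
      IsCompactOperator ⇑((T - μ • 1) * S - 1)}

section Aux

set_option linter.unusedSectionVars false

/-- Key ring lemma: if `a*b = 0 = b*a` and `m` is a unit commuting with `a` and `b`,
then `a + b - m` is a unit iff both `a - m` and `b - m` are units. -/
lemma isUnit_add_sub_iff {R : Type*} [Ring R] {a b m : R}
    (hab : a * b = 0) (hba : b * a = 0) (hm : IsUnit m)
    (hma : m * a = a * m) (hmb : m * b = b * m) :
    IsUnit (a + b - m) ↔ IsUnit (a - m) ∧ IsUnit (b - m) := by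
  have hxy : (a - m) * (b - m) = -(a + b - m) * m := by
    have h1 : (a - m) * (b - m) = a * b - a * m - m * b + m * m := by noncomm_ring
    rw [h1, hab, hmb]; noncomm_ring
  have hyx : (b - m) * (a - m) = -(a + b - m) * m := by
    have h1 : (b - m) * (a - m) = b * a - b * m - m * a + m * m := by noncomm_ring
    rw [h1, hba, hma]; noncomm_ring
  have hcomm : Commute (a - m) (b - m) := hxy.trans hyx.symm
  have hc2' : Commute (a + b - m) m := by
    show (a + b - m) * m = m * (a + b - m)
    rw [add_sub_assoc, add_mul, mul_add, sub_mul, mul_sub, hma, hmb]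
  have hc2 : Commute (-(a + b - m)) m := hc2'.neg_left
  calc IsUnit (a + b - m) ↔ IsUnit (-(a + b - m)) := (IsUnit.neg_iff _).symm
    _ ↔ IsUnit (-(a + b - m)) ∧ IsUnit m := (and_iff_left hm).symm
    _ ↔ IsUnit (-(a + b - m) * m) := hc2.isUnit_mul_iff.symm
    _ ↔ IsUnit ((a - m) * (b - m)) := by rw [hxy]
    _ ↔ IsUnit (a - m) ∧ IsUnit (b - m) := hcomm.isUnit_mul_iff

variable {H : Type*} [NormedAddCommGroup H] [InnerProductSpace ℂ H] [CompleteSpace H]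

lemma cpt_mul_left (A : H →L[ℂ] H) {B : H →L[ℂ] H} (h : IsCompactOperator ⇑B) :
    IsCompactOperator ⇑(A * B) :=
  h.clm_comp A

lemma cpt_mul_right {A : H →L[ℂ] H} (B : H →L[ℂ] H) (h : IsCompactOperator ⇑A) :
    IsCompactOperator ⇑(A * B) :=
  h.comp_clm B

/-- The congruence relation "equal modulo compact operators". -/
def calkinCon (H : Type*) [NormedAddCommGroup H] [InnerProductSpace ℂ H] [CompleteSpace H] :
    RingCon (H →L[ℂ] H) where
  r A B := IsCompactOperator ⇑(A - B)
  iseqv := by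
    constructor
    · intro A; simpa using isCompactOperator_zero
    · intro A B h
      have := h.neg
      have e : ⇑(B - A) = -⇑(A - B) := by ext x; simp
      exact e ▸ this
    · intro A B C h1 h2
      have := h1.add h2
      have e : ⇑(A - C) = ⇑(A - B) + ⇑(B - C) := by ext x; simp
      exact e ▸ this
  add' := by
    intro A B X Y h1 h2
    show IsCompactOperator ⇑(A + X - (B + Y))
    have := h1.add h2
    have e : ⇑(A + X - (B + Y)) = ⇑(A - B) + ⇑(X - Y) := by ext x; simp; abel
    exact e ▸ this
  mul' := by
    intro A B X Y h1 h2
    show IsCompactOperator ⇑(A * X - B * Y)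
    have k1 : IsCompactOperator ⇑(A * (X - Y)) := cpt_mul_left A h2
    have k2 : IsCompactOperator ⇑((A - B) * Y) := cpt_mul_right Y h1
    have := k1.add k2
    have e : ⇑(A * X - B * Y) = ⇑(A * (X - Y)) + ⇑((A - B) * Y) := by
      ext x; simp [mul_sub, sub_mul]
    exact e ▸ this

lemma calkinCon_iff {A B : H →L[ℂ] H} :
    calkinCon H A B ↔ IsCompactOperator ⇑(A - B) := Iff.rfl

/-- Invertibility modulo compact operators is `IsUnit` in the Calkin quotient. -/
lemma isUnit_calkin_iff (A : H →L[ℂ] H) :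
    IsUnit (A : (calkinCon H).Quotient) ↔
      ∃ B : H →L[ℂ] H, IsCompactOperator ⇑(B * A - 1) ∧ IsCompactOperator ⇑(A * B - 1) := by
  constructor
  · rintro ⟨u, hu⟩
    obtain ⟨B, hB⟩ := Quotient.exists_rep (u⁻¹ : (calkinCon H).Quotient ˣ).val
    have hB' : ((B : (H →L[ℂ] H)) : (calkinCon H).Quotient) = ↑(u⁻¹ : _ˣ) := hB
    refine ⟨B, ?_, ?_⟩
    · have : ((B * A : H →L[ℂ] H) : (calkinCon H).Quotient) = ((1 : H →L[ℂ] H) : _) := by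
        rw [RingCon.coe_mul, hB', ← hu, RingCon.coe_one, u.inv_mul]
      have h := (calkinCon H).eq.mp this
      simpa [calkinCon_iff] using h
    · have : ((A * B : H →L[ℂ] H) : (calkinCon H).Quotient) = ((1 : H →L[ℂ] H) : _) := by
        rw [RingCon.coe_mul, hB', ← hu, RingCon.coe_one, u.mul_inv]
      have h := (calkinCon H).eq.mp this
      simpa [calkinCon_iff] using h
  · rintro ⟨B, h1, h2⟩
    have e1 : ((B : H →L[ℂ] H) : (calkinCon H).Quotient) * A = 1 := by
      rw [← RingCon.coe_mul, ← RingCon.coe_one (calkinCon H)]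
      exact (calkinCon H).eq.mpr (by simpa [calkinCon_iff] using h1)
    have e2 : (A : (calkinCon H).Quotient) * B = 1 := by
      rw [← RingCon.coe_mul, ← RingCon.coe_one (calkinCon H)]
      exact (calkinCon H).eq.mpr (by simpa [calkinCon_iff] using h2)
    exact ⟨⟨(A : (calkinCon H).Quotient), (B : _), e2, e1⟩, rfl⟩

lemma calkin_key (S T : H →L[ℂ] H)
    (hST : IsCompactOperator ⇑(S * T)) (hTS : IsCompactOperator ⇑(T * S))
    {μ : ℂ} (hμ : μ ≠ 0) :
    IsUnit ((S + T - μ • 1 : H →L[ℂ] H) : (calkinCon H).Quotient) ↔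
      IsUnit ((S - μ • 1 : H →L[ℂ] H) : (calkinCon H).Quotient) ∧
      IsUnit ((T - μ • 1 : H →L[ℂ] H) : (calkinCon H).Quotient) := by
  set Q := (calkinCon H).Quotient
  set a : Q := (S : Q)
  set b : Q := (T : Q)
  set m : Q := ((μ • 1 : H →L[ℂ] H) : Q)
  have hab : a * b = 0 := by
    rw [show a * b = ((S * T : H →L[ℂ] H) : Q) from (RingCon.coe_mul _ _ _).symm,
      show (0 : Q) = ((0 : H →L[ℂ] H) : Q) from (RingCon.coe_zero _).symm]
    exact (calkinCon H).eq.mpr (by simpa [calkinCon_iff] using hST)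
  have hba : b * a = 0 := by
    rw [show b * a = ((T * S : H →L[ℂ] H) : Q) from (RingCon.coe_mul _ _ _).symm,
      show (0 : Q) = ((0 : H →L[ℂ] H) : Q) from (RingCon.coe_zero _).symm]
    exact (calkinCon H).eq.mpr (by simpa [calkinCon_iff] using hTS)
  have hop : (μ • 1 : H →L[ℂ] H) * (μ⁻¹ • 1) = 1 := by
    rw [smul_mul_assoc, one_mul, smul_smul, mul_inv_cancel₀ hμ, one_smul]
  have hop' : (μ⁻¹ • 1 : H →L[ℂ] H) * (μ • 1) = 1 := by
    rw [smul_mul_assoc, one_mul, smul_smul, inv_mul_cancel₀ hμ, one_smul]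
  have hm : IsUnit m := by
    refine ⟨⟨m, ((μ⁻¹ • 1 : H →L[ℂ] H) : Q), ?_, ?_⟩, rfl⟩
    · rw [show m * ((μ⁻¹ • 1 : H →L[ℂ] H) : Q)
          = (((μ • 1) * (μ⁻¹ • 1) : H →L[ℂ] H) : Q) from (RingCon.coe_mul _ _ _).symm,
        hop, RingCon.coe_one]
    · rw [show ((μ⁻¹ • 1 : H →L[ℂ] H) : Q) * m
          = (((μ⁻¹ • 1) * (μ • 1) : H →L[ℂ] H) : Q) from (RingCon.coe_mul _ _ _).symm,
        hop', RingCon.coe_one]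
  have hcen : ∀ X : H →L[ℂ] H, (μ • 1 : H →L[ℂ] H) * X = X * (μ • 1) := by
    intro X; rw [smul_mul_assoc, mul_smul_comm, one_mul, mul_one]
  have hma : m * a = a * m := by
    rw [show m * a = (((μ • 1) * S : H →L[ℂ] H) : Q) from (RingCon.coe_mul _ _ _).symm,
      show a * m = ((S * (μ • 1) : H →L[ℂ] H) : Q) from (RingCon.coe_mul _ _ _).symm, hcen]
  have hmb : m * b = b * m := by
    rw [show m * b = (((μ • 1) * T : H →L[ℂ] H) : Q) from (RingCon.coe_mul _ _ _).symm,
      show b * m = ((T * (μ • 1) : H →L[ℂ] H) : Q) from (RingCon.coe_mul _ _ _).symm, hcen]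
  have e1 : ((S + T - μ • 1 : H →L[ℂ] H) : Q) = a + b - m := by
    rw [RingCon.coe_sub, RingCon.coe_add]
  have e2 : ((S - μ • 1 : H →L[ℂ] H) : Q) = a - m := by rw [RingCon.coe_sub]
  have e3 : ((T - μ • 1 : H →L[ℂ] H) : Q) = b - m := by rw [RingCon.coe_sub]
  rw [e1, e2, e3]
  exact isUnit_add_sub_iff hab hba hm hma hmb

end Aux

lemma mem_essentialSpectrum_iff {H : Type*} [NormedAddCommGroup H] [InnerProductSpace ℂ H]
    [CompleteSpace H] (A : H →L[ℂ] H) (μ : ℂ) :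
    μ ∈ essentialSpectrum A ↔
      ¬ IsUnit (((A - μ • 1 : H →L[ℂ] H)) : (calkinCon H).Quotient) := by
  rw [essentialSpectrum, Set.mem_setOf_eq, isUnit_calkin_iff]

theorem essentialSpectrum_add_of_products_compact
    {H : Type*} [NormedAddCommGroup H] [InnerProductSpace ℂ H] [CompleteSpace H]
    (S T : H →L[ℂ] H)
    (hST : IsCompactOperator ⇑(S * T)) (hTS : IsCompactOperator ⇑(T * S)) :
    essentialSpectrum (S + T) \ {0}
      = (essentialSpectrum S ∪ essentialSpectrum T) \ {0} := by
  ext μ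
  simp only [Set.mem_diff, Set.mem_union, Set.mem_singleton_iff]
  constructor
  · rintro ⟨h, hμ⟩
    refine ⟨?_, hμ⟩
    rw [mem_essentialSpectrum_iff] at h
    rw [mem_essentialSpectrum_iff, mem_essentialSpectrum_iff, ← not_and_or]
    exact fun hc => h ((calkin_key S T hST hTS hμ).mpr hc)
  · rintro ⟨h, hμ⟩
    refine ⟨?_, hμ⟩
    rw [mem_essentialSpectrum_iff, mem_essentialSpectrum_iff, ← not_and_or] at h
    rw [mem_essentialSpectrum_iff]
    exact fun hc => h ((calkin_key S T hST hTS hμ).mp hc)
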